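/- arXiv:2104.08526 — 3 statements merged into one kernel-verified Lean document; each statement's English description precedes it below -/
import Mathlib

section
/- Let $Q \subset \mathbb{R}^d$ be a dyadic cube of side length $2^{-n}$ and let $B_k$ be the open ball of radius $2^{-k}$ centered at the origin, with $k < n$. Then the Lebesgue measure of the set $\{x \in \mathbb{R}^d : (x + \partial B_k) \cap Q \neq \emptyset\}$ is at most $C_d \cdot 2^{-k(d-1)} \cdot 2^{-n}$ for a constant $C_d$ depending only on $d$. -/
open MeasureTheory

/-- `Q` is a dyadic cube of side length `2^(-n)` in `ℝ^d`. -/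
def IsDyadicCube (d : ℕ) (n : ℤ) (Q : Set (EuclideanSpace ℝ (Fin d))) : Prop :=
  ∃ m : Fin d → ℤ, Q = {x | ∀ i, (2:ℝ) ^ (-n) * m i ≤ x i ∧ x i < (2:ℝ) ^ (-n) * (m i + 1)}

lemma pow_sub_pow_le_aux {a b : ℝ} (hb : 0 ≤ b) (hab : b ≤ a) :
    ∀ n : ℕ, a ^ (n+1) - b ^ (n+1) ≤ (n+1) * a ^ n * (a - b) := by
  intro n
  induction n with
  | zero => simp
  | succ p ih =>
    have ha : 0 ≤ a := hb.trans hab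
    have h1 : b ^ (p+1) ≤ a ^ (p+1) := pow_le_pow_left₀ hb hab _
    have key : a^(p+1+1) - b^(p+1+1) = a*(a^(p+1) - b^(p+1)) + b^(p+1)*(a-b) := by ring
    have h3 : a*(a^(p+1) - b^(p+1)) ≤ a*((p+1)*a^p*(a-b)) := mul_le_mul_of_nonneg_left ih ha
    have h4 : b^(p+1)*(a-b) ≤ a^(p+1)*(a-b) := mul_le_mul_of_nonneg_right h1 (by linarith)
    have h5 : a*((p+1)*a^p*(a-b)) = (p+1)*a^(p+1)*(a-b) := by ring
    push_cast
    nlinarith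

open Metric in
/-- If `Q` is a dyadic cube of side length `2^(-n)` and `k < n`, then the set of
points `x` such that the sphere `x + ∂B_k` (of radius `2^(-k)`) meets `Q` has
Lebesgue measure at most `C_d · 2^(-k(d-1)) · 2^(-n)`. -/
theorem volume_sphere_meets_dyadic_cube_le (d : ℕ) :
    ∃ C : ℝ, 0 < C ∧ ∀ (n k : ℤ) (Q : Set (EuclideanSpace ℝ (Fin d))),
      k < n → IsDyadicCube d n Q →
      volume {x : EuclideanSpace ℝ (Fin d) |
          (Metric.sphere x ((2:ℝ) ^ (-k)) ∩ Q).Nonempty}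
        ≤ ENNReal.ofReal (C * (2:ℝ) ^ (-k * ((d:ℤ) - 1)) * (2:ℝ) ^ (-n)) := by
  rcases Nat.eq_zero_or_pos d with hd | hd
  · refine ⟨1, one_pos, fun n k Q hkn _ => ?_⟩
    have hempty : {x : EuclideanSpace ℝ (Fin d) |
        (Metric.sphere x ((2:ℝ) ^ (-k)) ∩ Q).Nonempty} = ∅ := by
      subst hd
      ext x
      simp only [Set.mem_setOf_eq, Set.mem_empty_iff_false, iff_false]
      rintro ⟨y, hy, -⟩
      have : (x : EuclideanSpace ℝ (Fin 0)) = y := Subsingleton.elim _ _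
      have hr : (0:ℝ) < (2:ℝ) ^ (-k) := by positivity
      rw [mem_sphere, this, dist_self] at hy
      linarith
    rw [hempty, measure_empty]
    exact zero_le
  · haveI : Nonempty (Fin d) := Fin.pos_iff_nonempty.mp hd
    set v := (volume (ball (0:EuclideanSpace ℝ (Fin d)) 1)).toReal with hv
    have hv0 : 0 ≤ v := ENNReal.toReal_nonneg
    set Cd : ℝ := max ((d:ℝ) * (1+Real.sqrt d)^(d-1) * (2*Real.sqrt d) * v) 1 with hCd
    refine ⟨Cd, lt_of_lt_of_le one_pos (le_max_right _ _), ?_⟩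
    rintro n k Q hkn ⟨m, rfl⟩
    set s : ℝ := (2:ℝ) ^ (-n) with hs
    set r : ℝ := (2:ℝ) ^ (-k) with hr
    have hs0 : 0 < s := by positivity
    have hr0 : 0 < r := by positivity
    have hsr : s ≤ r := zpow_le_zpow_right₀ one_le_two (by linarith)
    set D : ℝ := Real.sqrt d * s with hD
    have hsqd : 0 ≤ Real.sqrt d := Real.sqrt_nonneg _
    have hD0 : 0 ≤ D := mul_nonneg hsqd hs0.le
    set q0 : EuclideanSpace ℝ (Fin d) := (WithLp.equiv 2 _).symm (fun i => s * m i) with hq0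
    have hq0i : ∀ i, q0 i = s * m i := fun i => rfl
    -- diameter bound
    have hdiam : ∀ y ∈ {x : EuclideanSpace ℝ (Fin d) |
        ∀ i, s * m i ≤ x i ∧ x i < s * (m i + 1)}, dist y q0 ≤ D := by
      intro y hy
      rw [EuclideanSpace.dist_eq]
      have hsum : ∑ i, dist (y i) (q0 i)^2 ≤ d * s^2 := by
        have : ∀ i ∈ Finset.univ, dist (y i) (q0 i)^2 ≤ s^2 := by
          intro i _
          have h1 := (hy i).1
          have h2 := (hy i).2
          rw [Real.dist_eq, sq_abs, hq0i i]
          nlinarith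
        calc ∑ i, dist (y i) (q0 i)^2 ≤ ∑ _i : Fin d, s^2 := Finset.sum_le_sum this
          _ = d * s^2 := by simp [mul_comm]
      calc Real.sqrt (∑ i, dist (y i) (q0 i)^2) ≤ Real.sqrt (d * s^2) := Real.sqrt_le_sqrt hsum
        _ = Real.sqrt d * s := by
            rw [Real.sqrt_mul (by positivity), Real.sqrt_sq hs0.le]
    set a : ℝ := r + D with ha
    set b : ℝ := max (r - D) 0 with hb
    have hb0 : 0 ≤ b := le_max_right _ _
    have hba : b ≤ a := by
      rcases max_cases (r - D) 0 with ⟨h, _⟩ | ⟨h, _⟩ <;> rw [hb, h] <;> [linarith; linarith]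
    have hab2D : a - b ≤ 2 * D := by
      have h := le_max_left (r - D) 0
      rw [ha, hb]
      linarith
    -- subset
    have hsub : {x : EuclideanSpace ℝ (Fin d) |
        (Metric.sphere x r ∩ {x | ∀ i, s * m i ≤ x i ∧ x i < s * (m i + 1)}).Nonempty} ⊆
        closedBall q0 a \ ball q0 b := by
      rintro x ⟨y, hy1, hy2⟩
      have hxy : dist x y = r := by rwa [mem_sphere, dist_comm] at hy1
      have hyq : dist y q0 ≤ D := hdiam y hy2
      constructor
      · rw [mem_closedBall]
        calc dist x q0 ≤ dist x y + dist y q0 := dist_triangle _ _ _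
          _ ≤ a := by rw [ha]; linarith
      · rw [mem_ball, not_lt]
        have h1 : r - D ≤ dist x q0 := by
          have := dist_triangle x y q0
          have h2 := abs_dist_sub_le x q0 y
          have := dist_triangle x q0 y
          rw [dist_comm y q0] at hyq
          linarith [dist_comm x y ▸ hxy]
        rcases max_cases (r - D) 0 with ⟨h, _⟩ | ⟨h, _⟩ <;> rw [hb, h]
        · exact h1
        · exact dist_nonneg
    -- measure computation
    have hmeas := measure_mono (μ := volume) hsub
    have hcb : volume (closedBall q0 a) = ENNReal.ofReal (a ^ d) * volume (ball (0:EuclideanSpace ℝ (Fin d)) 1) := by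
      rw [Measure.addHaar_closedBall volume q0 (by linarith)]
      congr 2
      simp
    have hbb : volume (ball q0 b) = ENNReal.ofReal (b ^ d) * volume (ball (0:EuclideanSpace ℝ (Fin d)) 1) := by
      rw [Measure.addHaar_ball volume q0 hb0]
      congr 2
      simp
    have hfin : volume (ball (0:EuclideanSpace ℝ (Fin d)) 1) ≠ ⊤ := measure_ball_lt_top.ne
    have hdiff : volume (closedBall q0 a \ ball q0 b) =
        ENNReal.ofReal (a ^ d - b ^ d) * volume (ball (0:EuclideanSpace ℝ (Fin d)) 1) := by
      rw [measure_diff (ball_subset_closedBall.trans (closedBall_subset_closedBall hba))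
        measurableSet_ball.nullMeasurableSet measure_ball_lt_top.ne, hcb, hbb,
        ENNReal.ofReal_sub _ (pow_nonneg hb0 d), ENNReal.sub_mul (fun _ _ => hfin)]
    rw [hdiff] at hmeas
    refine hmeas.trans ?_
    -- final real-number inequality
    have hvol : volume (ball (0:EuclideanSpace ℝ (Fin d)) 1) = ENNReal.ofReal v :=
      (ENNReal.ofReal_toReal hfin).symm
    rw [hvol, ← ENNReal.ofReal_mul (sub_nonneg.mpr (pow_le_pow_left₀ hb0 hba d))]
    apply ENNReal.ofReal_le_ofReal
    have hkey : a ^ d - b ^ d ≤ d * a ^ (d-1) * (a - b) := by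
      have := pow_sub_pow_le_aux hb0 hba (d-1)
      have hd1 : d - 1 + 1 = d := Nat.succ_pred_eq_of_pos hd
      rw [hd1] at this
      convert this using 3
      push_cast [Nat.cast_sub hd]
      ring
    have haR : a ≤ (1 + Real.sqrt d) * r := by
      have : D ≤ Real.sqrt d * r := mul_le_mul_of_nonneg_left hsr hsqd
      rw [ha]; nlinarith
    have hpow : a ^ (d-1) ≤ ((1 + Real.sqrt d) * r) ^ (d-1) :=
      pow_le_pow_left₀ (by linarith) haR _
    have hmain : (a ^ d - b ^ d) * v ≤
        ((d:ℝ) * (1+Real.sqrt d)^(d-1) * (2*Real.sqrt d) * v) * r^(d-1) * s := by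
      have h1 : a ^ d - b ^ d ≤ (d:ℝ) * ((1 + Real.sqrt d) * r) ^ (d-1) * (2*D) := by
        calc a ^ d - b ^ d ≤ d * a ^ (d-1) * (a - b) := hkey
          _ ≤ d * ((1 + Real.sqrt d) * r) ^ (d-1) * (2*D) := by
              apply mul_le_mul
              · exact mul_le_mul_of_nonneg_left hpow (by positivity)
              · exact hab2D
              · linarith
              · exact mul_nonneg (Nat.cast_nonneg d)
                  (pow_nonneg (mul_nonneg (by linarith) hr0.le) _)
      have h2 : (d:ℝ) * ((1 + Real.sqrt d) * r) ^ (d-1) * (2*D) =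
          ((d:ℝ) * (1+Real.sqrt d)^(d-1) * (2*Real.sqrt d)) * r^(d-1) * s := by
        rw [hD, mul_pow]; ring
      rw [h2] at h1
      calc (a ^ d - b ^ d) * v ≤ (((d:ℝ) * (1+Real.sqrt d)^(d-1) * (2*Real.sqrt d)) * r^(d-1) * s) * v :=
            mul_le_mul_of_nonneg_right h1 hv0
        _ = ((d:ℝ) * (1+Real.sqrt d)^(d-1) * (2*Real.sqrt d) * v) * r^(d-1) * s := by ring
    have hrpow : r ^ (d-1) = (2:ℝ) ^ (-k * ((d:ℤ) - 1)) := by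
      rw [hr, ← zpow_natCast ((2:ℝ)^(-k)) (d-1), ← zpow_mul]
      congr 1
      push_cast [Nat.cast_sub hd]
      ring
    calc (a ^ d - b ^ d) * v
        ≤ ((d:ℝ) * (1+Real.sqrt d)^(d-1) * (2*Real.sqrt d) * v) * r^(d-1) * s := hmain
      _ ≤ Cd * r^(d-1) * s := by
          apply mul_le_mul_of_nonneg_right _ hs0.le
          apply mul_le_mul_of_nonneg_right (le_max_left _ _) (pow_nonneg hr0.le _)
      _ = Cd * (2:ℝ) ^ (-k * ((d:ℤ) - 1)) * (2:ℝ) ^ (-n) := by rw [hrpow]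
end

section
/- (Cotlar's Lemma) Let $\mathcal{H}$ be a Hilbert space and $(T_k)_{k \in \mathbb{Z}}$ a family of bounded operators on $\mathcal{H}$ with only finitely many nonzero $T_k$. Suppose there is a nonnegative summable sequence $(\alpha_k)_{k \in \mathbb{Z}}$ such that $\max\{\|T_i^* T_j\|, \|T_i T_j^*\|\} \leq \alpha_{i-j}^2$ for all $i, j \in \mathbb{Z}$. Then $\|\sum_k T_k\| \leq \sum_k \alpha_k$. -/
open scoped BigOperators

section CotlarAux

variable {H : Type*} [NormedAddCommGroup H] [InnerProductSpace ℝ H] [CompleteSpace H]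


private lemma norm_star' (a : H →L[ℝ] H) : ‖star a‖ = ‖a‖ := by
  rw [ContinuousLinearMap.star_eq_adjoint]
  exact LinearIsometryEquiv.norm_map ContinuousLinearMap.adjoint a


private lemma norm_star_mul_self' (a : H →L[ℝ] H) : ‖star a * a‖ = ‖a‖ * ‖a‖ := by
  rw [ContinuousLinearMap.star_eq_adjoint]
  exact ContinuousLinearMap.norm_adjoint_comp_self a

private noncomputable def wprod (T : ℤ → H →L[ℝ] H) : Bool → List ℤ → (H →L[ℝ] H)
  | _, [] => 1
  | b, i :: l => (if b then T i else star (T i)) * wprod T (!b) l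

private lemma wprod_nil (T : ℤ → H →L[ℝ] H) (b : Bool) : wprod T b [] = 1 := rfl

private lemma wprod_cons (T : ℤ → H →L[ℝ] H) (b : Bool) (i : ℤ) (l : List ℤ) :
    wprod T b (i :: l) = (if b then T i else star (T i)) * wprod T (!b) l := rfl

private def pairB (α : ℤ → ℝ) : List ℤ → ℝ
  | [] => 1
  | [_] => α 0
  | i :: j :: l => α (i - j) ^ 2 * pairB α l

private lemma pairB_nil (α : ℤ → ℝ) : pairB α [] = 1 := rfl
private lemma pairB_single (α : ℤ → ℝ) (i : ℤ) : pairB α [i] = α 0 := rfl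
private lemma pairB_cons (α : ℤ → ℝ) (i j : ℤ) (l : List ℤ) :
    pairB α (i :: j :: l) = α (i - j) ^ 2 * pairB α l := rfl

private def chainB (α : ℤ → ℝ) : List ℤ → ℝ
  | [] => 1
  | [_] => 1
  | i :: j :: l => α (i - j) * chainB α (j :: l)

private lemma chainB_single (α : ℤ → ℝ) (i : ℤ) : chainB α [i] = 1 := rfl
private lemma chainB_cons (α : ℤ → ℝ) (i j : ℤ) (l : List ℤ) :
    chainB α (i :: j :: l) = α (i - j) * chainB α (j :: l) := rfl

private lemma pairB_nonneg (α : ℤ → ℝ) (hα : ∀ k, 0 ≤ α k) : ∀ l, 0 ≤ pairB α l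
  | [] => zero_le_one
  | [_] => hα 0
  | _ :: _ :: l => mul_nonneg (sq_nonneg _) (pairB_nonneg α hα l)

private lemma chainB_nonneg (α : ℤ → ℝ) (hα : ∀ k, 0 ≤ α k) : ∀ l, 0 ≤ chainB α l
  | [] => zero_le_one
  | [_] => zero_le_one
  | i :: j :: l => mul_nonneg (hα _) (chainB_nonneg α hα (j :: l))

private lemma norm_wprod_le (T : ℤ → H →L[ℝ] H) (α : ℤ → ℝ)
    (hT0 : ∀ i, ‖T i‖ ≤ α 0)
    (h1 : ∀ i j, ‖T i * star (T j)‖ ≤ α (i - j) ^ 2)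
    (h2 : ∀ i j, ‖star (T i) * T j‖ ≤ α (i - j) ^ 2)
    (hα : ∀ k, 0 ≤ α k) :
    ∀ (l : List ℤ) (b : Bool), ‖wprod T b l‖ ≤ pairB α l
  | [], b => by
      rw [wprod_nil, pairB_nil]
      simpa [ContinuousLinearMap.one_def] using
        (ContinuousLinearMap.norm_id_le : ‖(ContinuousLinearMap.id ℝ H)‖ ≤ 1)
  | [i], b => by
      rw [pairB_single, wprod_cons, wprod_nil, mul_one]
      cases b
      · simpa [norm_star'] using hT0 i
      · simpa using hT0 i
  | i :: j :: l, b => by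
      have IH := norm_wprod_le T α hT0 h1 h2 hα l b
      have hXY : ‖(if b then T i else star (T i)) * (if (!b) then T j else star (T j))‖
          ≤ α (i - j) ^ 2 := by
        cases b
        · simpa using h2 i j
        · simpa using h1 i j
      have e : wprod T b (i :: j :: l)
          = ((if b then T i else star (T i)) * (if (!b) then T j else star (T j)))
              * wprod T b l := by
        rw [wprod_cons, wprod_cons, Bool.not_not, mul_assoc]
      rw [e, pairB_cons]
      calc ‖_ * wprod T b l‖ ≤ _ * ‖wprod T b l‖ := norm_mul_le _ _
        _ ≤ α (i - j) ^ 2 * pairB α l :=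
          mul_le_mul hXY IH (norm_nonneg _) (sq_nonneg _)

private lemma norm_wprod_head_le (T : ℤ → H →L[ℝ] H) (α : ℤ → ℝ)
    (hT0 : ∀ i, ‖T i‖ ≤ α 0)
    (h1 : ∀ i j, ‖T i * star (T j)‖ ≤ α (i - j) ^ 2)
    (h2 : ∀ i j, ‖star (T i) * T j‖ ≤ α (i - j) ^ 2)
    (hα : ∀ k, 0 ≤ α k) (i : ℤ) (l : List ℤ) (b : Bool) :
    ‖wprod T b (i :: l)‖ ≤ α 0 * pairB α l := by
  rw [wprod_cons]
  calc ‖_ * wprod T (!b) l‖ ≤ _ * ‖wprod T (!b) l‖ := norm_mul_le _ _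
    _ ≤ α 0 * pairB α l := by
        apply mul_le_mul _ (norm_wprod_le T α hT0 h1 h2 hα l (!b)) (norm_nonneg _) (hα 0)
        cases b
        · simpa [norm_star'] using hT0 i
        · simpa using hT0 i

private lemma pairB_mul_tail (α : ℤ → ℝ) (hα : ∀ k, 0 ≤ α k) :
    ∀ l : List ℤ, l.length % 2 = 1 → pairB α l * pairB α l.tail ≤ α 0 * chainB α l ^ 2
  | [], h => by simp at h
  | [i], _ => by simp [pairB_single, pairB_nil, chainB_single]
  | [i, j], h => by simp at h
  | i :: j :: k :: l, h => by
      have h' : (k :: l).length % 2 = 1 := by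
        simp only [List.length_cons] at h ⊢; omega
      have IH := pairB_mul_tail α hα (k :: l) h'
      have e1 : pairB α (i :: j :: k :: l) * pairB α (i :: j :: k :: l).tail
          = (α (i - j) ^ 2 * α (j - k) ^ 2) * (pairB α (k :: l) * pairB α (k :: l).tail) := by
        simp only [List.tail_cons, pairB_cons]
        ring
      rw [e1]
      calc (α (i - j) ^ 2 * α (j - k) ^ 2) * (pairB α (k :: l) * pairB α (k :: l).tail)
          ≤ (α (i - j) ^ 2 * α (j - k) ^ 2) * (α 0 * chainB α (k :: l) ^ 2) :=
            mul_le_mul_of_nonneg_left IH (by positivity)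
        _ = α 0 * chainB α (i :: j :: k :: l) ^ 2 := by
            rw [chainB_cons, chainB_cons]
            ring

private lemma norm_wprod_chain (T : ℤ → H →L[ℝ] H) (α : ℤ → ℝ)
    (hT0 : ∀ i, ‖T i‖ ≤ α 0)
    (h1 : ∀ i j, ‖T i * star (T j)‖ ≤ α (i - j) ^ 2)
    (h2 : ∀ i j, ‖star (T i) * T j‖ ≤ α (i - j) ^ 2)
    (hα : ∀ k, 0 ≤ α k) (l : List ℤ) (hl : l.length % 2 = 1) (b : Bool) :
    ‖wprod T b l‖ ≤ α 0 * chainB α l := by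
  obtain ⟨i, l', rfl⟩ : ∃ i l', l = i :: l' := by
    cases l with
    | nil => simp at hl
    | cons a l' => exact ⟨a, l', rfl⟩
  have hsq : ‖wprod T b (i :: l')‖ ^ 2 ≤ (α 0 * chainB α (i :: l')) ^ 2 := by
    calc ‖wprod T b (i :: l')‖ ^ 2 = ‖wprod T b (i :: l')‖ * ‖wprod T b (i :: l')‖ := sq _
      _ ≤ pairB α (i :: l') * (α 0 * pairB α l') :=
          mul_le_mul (norm_wprod_le T α hT0 h1 h2 hα _ b)
            (norm_wprod_head_le T α hT0 h1 h2 hα i l' b) (norm_nonneg _)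
            (pairB_nonneg α hα _)
      _ = α 0 * (pairB α (i :: l') * pairB α (i :: l').tail) := by
          simp only [List.tail_cons]; ring
      _ ≤ α 0 * (α 0 * chainB α (i :: l') ^ 2) :=
          mul_le_mul_of_nonneg_left (pairB_mul_tail α hα _ hl) (hα 0)
      _ = (α 0 * chainB α (i :: l')) ^ 2 := by ring
  have h0 : 0 ≤ α 0 * chainB α (i :: l') :=
    mul_nonneg (hα 0) (chainB_nonneg α hα _)
  exact (pow_le_pow_iff_left₀ (norm_nonneg _) h0 two_ne_zero).mp hsq

private noncomputable def wsum (T : ℤ → H →L[ℝ] H) (s : Finset ℤ) :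
    Bool → ℕ → (H →L[ℝ] H)
  | _, 0 => 1
  | b, m + 1 => (∑ i ∈ s, if b then T i else star (T i)) * wsum T s (!b) m

private lemma wsum_zero (T : ℤ → H →L[ℝ] H) (s : Finset ℤ) (b : Bool) :
    wsum T s b 0 = 1 := rfl

private lemma wsum_succ (T : ℤ → H →L[ℝ] H) (s : Finset ℤ) (b : Bool) (m : ℕ) :
    wsum T s b (m + 1) = (∑ i ∈ s, if b then T i else star (T i)) * wsum T s (!b) m := rfl

private lemma wsum_expand (T : ℤ → H →L[ℝ] H) (s : Finset ℤ) :
    ∀ (m : ℕ) (b : Bool),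
      (∑ f : Fin m → {x // x ∈ s}, wprod T b (List.ofFn fun k => ((f k : ℤ))))
        = wsum T s b m
  | 0, b => by
      simp [wprod_nil, wsum_zero]
  | m + 1, b => by
      rw [← (Fin.consEquiv fun _ : Fin (m + 1) => ({x // x ∈ s} : Type _)).sum_comp
            (fun f : Fin (m + 1) → {x // x ∈ s} =>
              wprod T b (List.ofFn fun k => ((f k : ℤ)))),
        Fintype.sum_prod_type]
      have key : ∀ (x : {x // x ∈ s}) (y : Fin m → {x // x ∈ s}),
          wprod T b (List.ofFn fun k =>
              (((Fin.consEquiv fun _ : Fin (m + 1) => ({x // x ∈ s} : Type _)) (x, y) k : ℤ)))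
            = (if b then T ↑x else star (T ↑x))
                * wprod T (!b) (List.ofFn fun k => ((y k : ℤ))) := by
        intro x y
        have e : (List.ofFn fun k =>
            (((Fin.consEquiv fun _ : Fin (m + 1) => ({x // x ∈ s} : Type _)) (x, y) k : ℤ)))
            = (↑x) :: List.ofFn fun k => ((y k : ℤ)) := by
          simp [Fin.consEquiv, List.ofFn_succ]
        rw [e, wprod_cons]
      simp only [key]
      rw [← Finset.sum_mul_sum, Finset.sum_coe_sort s (fun i => if b then T i else star (T i)),
        wsum_expand T s m (!b), wsum_succ]

private lemma sum_alpha_le (α : ℤ → ℝ) (hα : ∀ k, 0 ≤ α k) (hsum : Summable α)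
    (s : Finset ℤ) (j : ℤ) :
    (∑ x : {x // x ∈ s}, α ((x : ℤ) - j)) ≤ ∑' k, α k := by
  rw [Finset.sum_coe_sort s (fun i => α (i - j))]
  have hs : Summable fun i : ℤ => α (i - j) := by
    have := (Equiv.subRight j).summable_iff.mpr hsum
    exact this
  calc ∑ i ∈ s, α (i - j) ≤ ∑' i : ℤ, α (i - j) := Summable.sum_le_tsum s (fun i _ => hα _) hs
    _ = ∑' k, α k := by
        have := (Equiv.subRight j).tsum_eq α
        simpa using this

private lemma chainB_sum (α : ℤ → ℝ) (hα : ∀ k, 0 ≤ α k) (hsum : Summable α) (s : Finset ℤ) :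
    ∀ m : ℕ, (∑ f : Fin (m + 1) → {x // x ∈ s}, chainB α (List.ofFn fun k => ((f k : ℤ))))
      ≤ (s.card : ℝ) * (∑' k, α k) ^ m
  | 0 => by
      have e : ∀ f : Fin 1 → {x // x ∈ s},
          chainB α (List.ofFn fun k => ((f k : ℤ))) = 1 := by
        intro f
        simp [List.ofFn_succ, chainB_single]
      rw [Finset.sum_congr rfl fun f _ => e f]
      simp
  | m + 1 => by
      have IH := chainB_sum α hα hsum s m
      set B := ∑' k, α k with hB
      have hB0 : 0 ≤ B := tsum_nonneg hα
      rw [← (Fin.consEquiv fun _ : Fin (m + 2) => ({x // x ∈ s} : Type _)).sum_comp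
            (fun f : Fin (m + 2) → {x // x ∈ s} =>
              chainB α (List.ofFn fun k => ((f k : ℤ)))),
        Fintype.sum_prod_type]
      have key : ∀ (x : {x // x ∈ s}) (y : Fin (m + 1) → {x // x ∈ s}),
          chainB α (List.ofFn fun k =>
              (((Fin.consEquiv fun _ : Fin (m + 2) => ({x // x ∈ s} : Type _)) (x, y) k : ℤ)))
            = α ((x : ℤ) - (y 0 : ℤ)) * chainB α (List.ofFn fun k => ((y k : ℤ))) := by
        intro x y
        have e : (List.ofFn fun k =>
            (((Fin.consEquiv fun _ : Fin (m + 2) => ({x // x ∈ s} : Type _)) (x, y) k : ℤ)))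
            = (↑x) :: List.ofFn fun k => ((y k : ℤ)) := by
          simp [Fin.consEquiv, List.ofFn_succ]
        have e2 : (List.ofFn fun k => ((y k : ℤ)))
            = (↑(y 0)) :: List.ofFn fun k : Fin m => ((y k.succ : ℤ)) := by
          simp [List.ofFn_succ]
        rw [e, e2, chainB_cons, ← e2]
      simp only [key]
      rw [Finset.sum_comm]
      calc ∑ y : Fin (m + 1) → {x // x ∈ s}, ∑ x : {x // x ∈ s},
              α ((x : ℤ) - (y 0 : ℤ)) * chainB α (List.ofFn fun k => ((y k : ℤ)))
          = ∑ y : Fin (m + 1) → {x // x ∈ s},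
              (∑ x : {x // x ∈ s}, α ((x : ℤ) - (y 0 : ℤ)))
                * chainB α (List.ofFn fun k => ((y k : ℤ))) := by
            refine Finset.sum_congr rfl fun y _ => ?_
            rw [Finset.sum_mul]
        _ ≤ ∑ y : Fin (m + 1) → {x // x ∈ s},
              B * chainB α (List.ofFn fun k => ((y k : ℤ))) := by
            refine Finset.sum_le_sum fun y _ => ?_
            exact mul_le_mul_of_nonneg_right (sum_alpha_le α hα hsum s _)
              (chainB_nonneg α hα _)
        _ = B * ∑ y : Fin (m + 1) → {x // x ∈ s},
              chainB α (List.ofFn fun k => ((y k : ℤ))) := by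
            rw [Finset.mul_sum]
        _ ≤ B * ((s.card : ℝ) * B ^ m) := mul_le_mul_of_nonneg_left IH hB0
        _ = (s.card : ℝ) * B ^ (m + 1) := by ring

private lemma sa_norm_pow {E : Type*} [NormedRing E] [StarRing E] [CStarRing E] {a : E}
    (ha : IsSelfAdjoint a) {m : ℕ} (hm : 0 < m) : ‖a ^ m‖ = ‖a‖ ^ m := by
  rcases eq_or_ne ‖a‖ 0 with h0 | h0
  · have h1 : ‖a ^ m‖ ≤ 0 := by
      simpa [h0, zero_pow hm.ne'] using norm_pow_le' a hm
    rw [h0, zero_pow hm.ne']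
    exact le_antisymm h1 (norm_nonneg _)
  · refine le_antisymm (norm_pow_le' a hm) ?_
    have hk : m < 2 ^ m := Nat.lt_two_pow_self
    have h2 : ‖a ^ 2 ^ m‖ = ‖a‖ ^ 2 ^ m := by
      have h := ha.nnnorm_pow_two_pow m
      calc ‖a ^ 2 ^ m‖ = ((‖a ^ 2 ^ m‖₊ : ℝ)) := (coe_nnnorm _).symm
        _ = ((‖a‖₊ ^ 2 ^ m : NNReal) : ℝ) := by rw [h]
        _ = ‖a‖ ^ 2 ^ m := by push_cast; rfl
    have hsplit : a ^ 2 ^ m = a ^ m * a ^ (2 ^ m - m) := by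
      rw [← pow_add]; congr 1; omega
    have h3 : ‖a‖ ^ 2 ^ m ≤ ‖a ^ m‖ * ‖a‖ ^ (2 ^ m - m) := by
      rw [← h2, hsplit]
      calc ‖a ^ m * a ^ (2 ^ m - m)‖ ≤ ‖a ^ m‖ * ‖a ^ (2 ^ m - m)‖ := norm_mul_le _ _
        _ ≤ ‖a ^ m‖ * ‖a‖ ^ (2 ^ m - m) :=
            mul_le_mul_of_nonneg_left (norm_pow_le' a (by omega)) (norm_nonneg _)
    have hpos : 0 < ‖a‖ ^ (2 ^ m - m) :=
      pow_pos (lt_of_le_of_ne (norm_nonneg a) (Ne.symm h0)) _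
    have e : ‖a‖ ^ 2 ^ m = ‖a‖ ^ m * ‖a‖ ^ (2 ^ m - m) := by
      rw [← pow_add]; congr 1; omega
    rw [e] at h3
    exact le_of_mul_le_mul_right h3 hpos

end CotlarAux

/-- **Cotlar's Lemma.** If `(T k)` is a family of bounded operators on a Hilbert
space, all but finitely many zero, and `(α k)` is a nonnegative summable sequence with
`max ‖T i * (T j)ᵃ‖ ‖(T i)ᵃ * T j‖ ≤ α (i - j) ^ 2`, then `‖∑ T k‖ ≤ ∑ α k`. -/
theorem cotlar_lemma {H : Type*} [NormedAddCommGroup H] [InnerProductSpace ℝ H]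
    [CompleteSpace H] (T : ℤ → H →L[ℝ] H) (s : Finset ℤ)
    (hT : ∀ k ∉ s, T k = 0) (α : ℤ → ℝ) (hα : ∀ k, 0 ≤ α k) (hsum : Summable α)
    (hbound : ∀ i j : ℤ,
      max ‖(ContinuousLinearMap.adjoint (T i)).comp (T j)‖
          ‖(T i).comp (ContinuousLinearMap.adjoint (T j))‖ ≤ α (i - j) ^ 2) :
    ‖∑ k ∈ s, T k‖ ≤ ∑' k, α k := by
  classical
  -- translate the hypotheses into `star` language
  have h2 : ∀ i j, ‖star (T i) * T j‖ ≤ α (i - j) ^ 2 := by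
    intro i j
    have := le_trans (le_max_left _ _) (hbound i j)
    rw [ContinuousLinearMap.star_eq_adjoint]
    exact this
  have h1 : ∀ i j, ‖T i * star (T j)‖ ≤ α (i - j) ^ 2 := by
    intro i j
    have := le_trans (le_max_right _ _) (hbound i j)
    rw [ContinuousLinearMap.star_eq_adjoint]
    exact this
  have hT0 : ∀ i, ‖T i‖ ≤ α 0 := by
    intro i
    have h := h2 i i
    rw [norm_star_mul_self', sub_self] at h
    have hsq : ‖T i‖ ^ 2 ≤ α 0 ^ 2 := by rw [sq]; exact h
    exact (pow_le_pow_iff_left₀ (norm_nonneg _) (hα 0) two_ne_zero).mp hsq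
  set S : H →L[ℝ] H := ∑ k ∈ s, T k with hS
  set B : ℝ := ∑' k, α k with hB
  have hB0 : 0 ≤ B := tsum_nonneg hα
  have hA0B : α 0 ≤ B := Summable.le_tsum hsum 0 fun k _ => hα k
  -- the sum operators at each parity
  have hsum_true : (∑ i ∈ s, if true then T i else star (T i)) = S := by simp [hS]
  have hsum_false : (∑ i ∈ s, if false then T i else star (T i)) = star S := by
    simp [hS, star_sum]
  -- `wsum true (2n+1) = S * (star S * S)^n`
  have hwsum : ∀ n : ℕ, wsum T s true (2 * n + 1) = S * (star S * S) ^ n := by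
    intro n
    induction n with
    | zero => simp [wsum_succ, wsum_zero, hsum_true, hS]
    | succ n ih =>
        have e : 2 * (n + 1) + 1 = (2 * n + 1) + 1 + 1 := by ring
        rw [e, wsum_succ, wsum_succ, Bool.not_true, Bool.not_false, ih, hsum_true,
          hsum_false, pow_succ']
        simp only [mul_assoc]
  -- the key estimate
  have hkey : ∀ n : ℕ, ‖S‖ ^ (2 * n + 1) ≤ (s.card : ℝ) * α 0 * B ^ (2 * n) := by
    intro n
    set X := S * (star S * S) ^ n with hX
    have hXw : wsum T s true (2 * n + 1) = X := hwsum n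
    have hsa : IsSelfAdjoint (star S * S) := by
      rw [IsSelfAdjoint, star_mul, star_star]
    have hstarX : star X * X = (star S * S) ^ (2 * n + 1) := by
      have hsX : star X = (star S * S) ^ n * star S := by
        rw [hX, star_mul, star_pow, hsa.star_eq]
      rw [hsX, hX]
      calc (star S * S) ^ n * star S * (S * (star S * S) ^ n)
          = ((star S * S) ^ n * (star S * S)) * (star S * S) ^ n := by
            simp only [mul_assoc]
        _ = (star S * S) ^ (n + 1) * (star S * S) ^ n := by rw [pow_succ]
        _ = (star S * S) ^ (2 * n + 1) := by rw [← pow_add]; congr 1; omega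
    have hXnorm : ‖X‖ ^ 2 = (‖S‖ ^ 2) ^ (2 * n + 1) := by
      calc ‖X‖ ^ 2 = ‖X‖ * ‖X‖ := sq _
        _ = ‖star X * X‖ := (norm_star_mul_self' X).symm
        _ = ‖(star S * S) ^ (2 * n + 1)‖ := by rw [hstarX]
        _ = ‖star S * S‖ ^ (2 * n + 1) := sa_norm_pow hsa (by omega)
        _ = (‖S‖ * ‖S‖) ^ (2 * n + 1) := by rw [norm_star_mul_self']
        _ = (‖S‖ ^ 2) ^ (2 * n + 1) := by rw [sq]
    have hXn : ‖X‖ = ‖S‖ ^ (2 * n + 1) := by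
      have h' : ‖X‖ ^ 2 = (‖S‖ ^ (2 * n + 1)) ^ 2 := by
        rw [hXnorm, ← pow_mul, ← pow_mul, mul_comm 2 (2 * n + 1)]
      have := congrArg Real.sqrt h'
      rwa [Real.sqrt_sq (norm_nonneg _), Real.sqrt_sq (pow_nonneg (norm_nonneg _) _)] at this
    have hXle : ‖X‖ ≤ α 0 * ((s.card : ℝ) * B ^ (2 * n)) := by
      rw [← hXw, ← wsum_expand]
      calc ‖∑ f : Fin (2 * n + 1) → {x // x ∈ s},
              wprod T true (List.ofFn fun k => ((f k : ℤ)))‖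
          ≤ ∑ f : Fin (2 * n + 1) → {x // x ∈ s},
              ‖wprod T true (List.ofFn fun k => ((f k : ℤ)))‖ := norm_sum_le _ _
        _ ≤ ∑ f : Fin (2 * n + 1) → {x // x ∈ s},
              α 0 * chainB α (List.ofFn fun k => ((f k : ℤ))) := by
            refine Finset.sum_le_sum fun f _ => ?_
            refine norm_wprod_chain T α hT0 h1 h2 hα _ ?_ true
            simp only [List.length_ofFn]
            omega
        _ = α 0 * ∑ f : Fin (2 * n + 1) → {x // x ∈ s},
              chainB α (List.ofFn fun k => ((f k : ℤ))) := by rw [Finset.mul_sum]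
        _ ≤ α 0 * ((s.card : ℝ) * B ^ (2 * n)) :=
            mul_le_mul_of_nonneg_left (chainB_sum α hα hsum s (2 * n)) (hα 0)
    calc ‖S‖ ^ (2 * n + 1) = ‖X‖ := hXn.symm
      _ ≤ α 0 * ((s.card : ℝ) * B ^ (2 * n)) := hXle
      _ = (s.card : ℝ) * α 0 * B ^ (2 * n) := by ring
  -- conclude by letting `n → ∞`
  by_contra hc
  push_neg at hc
  have hSpos : 0 < ‖S‖ := lt_of_le_of_lt hB0 hc
  rcases hB0.eq_or_lt with h0 | hBpos
  · have hα0 : α 0 = 0 := le_antisymm (by linarith) (hα 0)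
    have hTz : ∀ k ∈ s, T k = 0 := by
      intro k _
      have h := hT0 k
      rw [hα0] at h
      exact norm_le_zero_iff.mp h
    have hS0 : S = 0 := Finset.sum_eq_zero hTz
    rw [hS0] at hSpos
    simp at hSpos
  · set C := (s.card : ℝ) * α 0 with hC
    have hρ : 1 < (‖S‖ / B) ^ 2 := by
      have h1' : 1 < ‖S‖ / B := (one_lt_div hBpos).mpr hc
      exact one_lt_pow₀ h1' two_ne_zero
    obtain ⟨n, hn⟩ := pow_unbounded_of_one_lt (C / B) hρ
    have hk := hkey n
    have h1' : B * ‖S‖ ^ (2 * n) ≤ C * B ^ (2 * n) := by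
      calc B * ‖S‖ ^ (2 * n) ≤ ‖S‖ * ‖S‖ ^ (2 * n) :=
            mul_le_mul_of_nonneg_right hc.le (pow_nonneg (norm_nonneg _) _)
        _ = ‖S‖ ^ (2 * n + 1) := by rw [pow_succ']
        _ ≤ C * B ^ (2 * n) := hk
    have h2' : ((‖S‖ / B) ^ 2) ^ n ≤ C / B := by
      rw [← pow_mul, div_pow, div_le_div_iff₀ (pow_pos hBpos _) hBpos]
      calc ‖S‖ ^ (2 * n) * B = B * ‖S‖ ^ (2 * n) := mul_comm _ _
        _ ≤ C * B ^ (2 * n) := h1'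
    exact absurd hn (not_lt.mpr h2')
end

section
/- (Carbery's variant of Cotlar's Lemma) Let $(Q_k)_{k \in \mathbb{Z}}$ and $(R_k)_{k \in \mathbb{Z}}$ be sequences of bounded operators on a Hilbert space $\mathcal{H}$, only finitely many $R_k$ nonzero, and let $\varepsilon > 0$, $C > 0$. Assume: (i) $\sum_j Q_j = I$ in the strong operator topology; (ii) $\|Q_j^* Q_k\| + \|Q_j Q_k^*\| \leq C\, 2^{-\varepsilon|j-k|}$ for all $j,k$; (iii) $\|R_j Q_k^*\| + \|R_j^* Q_k\| \leq C\, 2^{-\varepsilon|j-k|}$ for all $j,k$; (iv) $\|R_j\| \leq C$ for all $j$. Then $\sum_j R_j$ is a bounded operator on $\mathcal{H}$ with operator norm bounded by a constant depending only on $C$ and $\varepsilon$. -/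
set_option maxHeartbeats 1600000
open Real

noncomputable def ker (c : ℝ) (j k : ℤ) : ℝ := (2:ℝ) ^ (-(c * |(j:ℝ) - (k:ℝ)|))

lemma ker_pos (c : ℝ) (j k : ℤ) : 0 < ker c j k := rpow_pos_of_pos two_pos _

lemma ker_le_one {c : ℝ} (hc : 0 ≤ c) (j k : ℤ) : ker c j k ≤ 1 :=
  rpow_le_one_of_one_le_of_nonpos one_le_two
    (neg_nonpos.mpr (mul_nonneg hc (abs_nonneg _)))

lemma ker_self {c : ℝ} (j : ℤ) : ker c j j = 1 := by
  unfold ker; simp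

lemma ker_symm (c : ℝ) (j k : ℤ) : ker c j k = ker c k j := by
  unfold ker; rw [abs_sub_comm]

lemma ker_mono {c c' : ℝ} (h : c' ≤ c) (j k : ℤ) : ker c j k ≤ ker c' j k := by
  apply rpow_le_rpow_of_exponent_le one_le_two
  have := abs_nonneg ((j:ℝ) - k)
  nlinarith

lemma ker_mul_self (c : ℝ) (j k : ℤ) : ker c j k * ker c j k = ker (2*c) j k := by
  unfold ker
  rw [← rpow_add two_pos]; ring_nf

lemma ker_natAbs (c : ℝ) (n q : ℤ) : ker c n q = ((2:ℝ) ^ (-c)) ^ (n - q).natAbs := by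
  unfold ker
  rw [← rpow_natCast ((2:ℝ) ^ (-c)) _, ← rpow_mul (by norm_num : (0:ℝ) ≤ 2)]
  congr 1
  have : |(n:ℝ) - (q:ℝ)| = ((n-q).natAbs : ℝ) := by
    rw [Nat.cast_natAbs, ← Int.cast_sub, Int.cast_abs]
  rw [this]; ring

lemma summable_ker {c : ℝ} (hc : 0 < c) (q : ℤ) : Summable (fun m : ℤ => ker c m q) := by
  have hr0 : (0:ℝ) ≤ (2:ℝ)^(-c) := (rpow_pos_of_pos two_pos _).le
  have hr : (2:ℝ)^(-c) < 1 :=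
    rpow_lt_one_of_one_lt_of_neg one_lt_two (neg_neg_iff_pos.mpr hc)
  have hgeo : Summable (fun n : ℕ => ((2:ℝ)^(-c)) ^ n) :=
    summable_geometric_of_lt_one hr0 hr
  have h : Summable (fun n : ℤ => ((2:ℝ)^(-c)) ^ n.natAbs) := by
    apply Summable.of_nat_of_neg
    · simpa using hgeo
    · simpa using hgeo
  have := (Equiv.subRight q).summable_iff (f := fun n : ℤ => ((2:ℝ)^(-c)) ^ n.natAbs)
  have h2 : Summable (fun m : ℤ => ((2:ℝ)^(-c)) ^ (m - q).natAbs) := this.mpr h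
  exact h2.congr fun m => (ker_natAbs c m q).symm

lemma tsum_ker_eq (c : ℝ) (q : ℤ) :
    ∑' m : ℤ, ker c m q = ∑' m : ℤ, ker c m 0 := by
  simp only [ker_natAbs c _ q, ker_natAbs c _ 0]
  rw [← (Equiv.subRight q).tsum_eq (f := fun n : ℤ => ((2:ℝ)^(-c)) ^ (n - 0).natAbs)]
  simp

/-- a ≤ b from squares -/
lemma le_of_sq_le_sq' {a b : ℝ} (ha : 0 ≤ a) (hb : 0 ≤ b) (h : a^2 ≤ b^2) : a ≤ b := by
  nlinarith

lemma key_combine {x a c : ℝ} (hc : 0 < c) (hx : 0 ≤ x) (ha : 0 ≤ a)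
    (j m l : ℤ) (h1 : x ≤ a * ker c j m) (h2 : x ≤ a * ker c m l) :
    x ≤ a * (ker (c/4) j l * ker (c/4) m l) := by
  have hb : 0 ≤ a * (ker (c/4) j l * ker (c/4) m l) := by
    have := (ker_pos (c/4) j l).le; have := (ker_pos (c/4) m l).le; positivity
  apply le_of_sq_le_sq' hx hb
  have hsq : x^2 ≤ (a * ker c j m) * (a * ker c m l) := by
    nlinarith [ker_pos c j m, ker_pos c m l]
  refine hsq.trans ?_
  unfold ker
  set u := -(c * |(j:ℝ) - m|) with hu
  set v := -(c * |(m:ℝ) - l|) with hv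
  set p := -(c/4 * |(j:ℝ) - l|) with hp
  set q := -(c/4 * |(m:ℝ) - l|) with hq
  have e2 : ((2:ℝ)^(p+q))^2 = 2^((p+q)*2) := by
    rw [← rpow_natCast ((2:ℝ)^(p+q)) 2, ← rpow_mul (by norm_num : (0:ℝ) ≤ 2)]
    norm_num
  have hle : (2:ℝ)^(u+v) ≤ 2^((p+q)*2) := by
    apply rpow_le_rpow_of_exponent_le one_le_two
    have htri : |(j:ℝ) - l| ≤ |(j:ℝ) - m| + |(m:ℝ) - l| := abs_sub_le _ _ _
    have h3 := abs_nonneg ((j:ℝ) - m)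
    have h4 := abs_nonneg ((m:ℝ) - l)
    rw [hu, hv, hp, hq]; nlinarith
  calc a * (2:ℝ)^u * (a * (2:ℝ)^v) = a^2 * (2:ℝ)^(u+v) := by
        rw [rpow_add two_pos]; ring
    _ ≤ a^2 * (2:ℝ)^((p+q)*2) := by nlinarith [sq_nonneg a, rpow_pos_of_pos (two_pos (α := ℝ)) (u+v)]
    _ = (a * ((2:ℝ)^p * (2:ℝ)^q))^2 := by rw [← rpow_add two_pos] at *; rw [← e2]; ring
open Real ContinuousLinearMap

variable {H : Type} [NormedAddCommGroup H] [InnerProductSpace ℝ H] [CompleteSpace H]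

lemma opNorm_le_of_inner (A : H →L[ℝ] H) {M : ℝ} (hM : 0 ≤ M)
    (h : ∀ x y : H, (inner ℝ (A x) y : ℝ) ≤ M * (‖x‖ * ‖y‖)) : ‖A‖ ≤ M := by
  apply ContinuousLinearMap.opNorm_le_bound _ hM
  intro x
  rcases eq_or_ne (A x) 0 with hx | hx
  · rw [hx, norm_zero]; positivity
  · have h1 := h x (A x)
    rw [real_inner_self_eq_norm_mul_norm] at h1
    have h2 : 0 < ‖A x‖ := norm_pos_iff.mpr hx
    nlinarith

def tupleSet (t : Finset (ℤ×ℤ)) : ℕ → Finset (List (ℤ×ℤ))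
  | 0 => {[]}
  | n+1 => (t ×ˢ tupleSet t n).image fun pl => pl.1 :: pl.2

noncomputable def chainW (d : ℤ → ℤ → ℝ) : ℤ → List (ℤ×ℤ) → ℝ
  | _, [] => 1
  | q, p :: l => d q p.1 * d p.1 p.2 * chainW d p.2 l

noncomputable def chain2 (d : ℤ → ℤ → ℝ) : ℤ → List (ℤ×ℤ) → ℝ
  | _, [] => 1
  | q, p :: l => d q p.1 ^ 2 * chain2 d p.2 l

lemma chainW_nonneg {d : ℤ → ℤ → ℝ} (hd : ∀ j k, 0 ≤ d j k) :
    ∀ (l : List (ℤ×ℤ)) (q : ℤ), 0 ≤ chainW d q l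
  | [], _ => zero_le_one
  | p :: l, q => mul_nonneg (mul_nonneg (hd _ _) (hd _ _)) (chainW_nonneg hd l p.2)

lemma chain2_nonneg {d : ℤ → ℤ → ℝ} (hd : ∀ j k, 0 ≤ d j k) :
    ∀ (l : List (ℤ×ℤ)) (q : ℤ), 0 ≤ chain2 d q l
  | [], _ => zero_le_one
  | p :: l, q => mul_nonneg (sq_nonneg _) (chain2_nonneg hd l p.2)

lemma prodW_nonneg {d : ℤ → ℤ → ℝ} (hd : ∀ j k, 0 ≤ d j k) (l : List (ℤ×ℤ)) :
    0 ≤ (l.map fun p => d p.1 p.2 ^ 2).prod := by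
  induction l with
  | nil => simp
  | cons p l ih => simp only [List.map_cons, List.prod_cons]
                   exact mul_nonneg (sq_nonneg _) ih

lemma chain_ident (d : ℤ → ℤ → ℝ) :
    ∀ (l : List (ℤ×ℤ)) (q : ℤ),
      (l.map fun p => d p.1 p.2 ^ 2).prod * chain2 d q l = (chainW d q l)^2
  | [], q => by simp [chainW, chain2]
  | p :: l, q => by
      have ih := chain_ident d l p.2
      simp only [List.map_cons, List.prod_cons, chainW, chain2]
      calc d p.1 p.2 ^ 2 * (List.map (fun p => d p.1 p.2 ^ 2) l).prod * (d q p.1 ^ 2 * chain2 d p.2 l)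
          = d q p.1 ^2 * d p.1 p.2 ^ 2 * ((List.map (fun p => d p.1 p.2 ^ 2) l).prod * chain2 d p.2 l) := by ring
        _ = d q p.1 ^2 * d p.1 p.2 ^ 2 * (chainW d p.2 l)^2 := by rw [ih]
        _ = (d q p.1 * d p.1 p.2 * chainW d p.2 l) ^ 2 := by ring

lemma cons_injOn (t : Finset ((ℤ×ℤ) × List (ℤ×ℤ))) :
    Set.InjOn (fun pl : (ℤ×ℤ) × List (ℤ×ℤ) => pl.1 :: pl.2) t := by
  intro a _ b _ h
  simp only [List.cons.injEq] at h
  exact Prod.ext h.1 h.2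

lemma le_of_sq_le_sq2 {a b : ℝ} (ha : 0 ≤ a) (hb : 0 ≤ b) (h : a^2 ≤ b^2) : a ≤ b := by
  nlinarith

theorem cotlar_stein (R : ℤ → H →L[ℝ] H) (s : Finset ℤ) (d : ℤ → ℤ → ℝ) (C β : ℝ)
    (hC0 : 0 ≤ C) (hβ0 : 0 ≤ β)
    (hd : ∀ j k, 0 ≤ d j k)
    (hM : ∀ j k, ‖adjoint (R j) * R k‖ ≤ d j k ^ 2)
    (hM' : ∀ j k, ‖R j * adjoint (R k)‖ ≤ d j k ^ 2)
    (hRC : ∀ j, ‖R j‖ ≤ C)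
    (hrow : ∀ q, ∑ k ∈ s, d q k ≤ β) :
    ‖∑ k ∈ s, R k‖ ≤ max β 1 := by
  classical
  set M : ℤ×ℤ → (H →L[ℝ] H) := fun p => adjoint (R p.1) * R p.2 with hMdef
  set t : Finset (ℤ×ℤ) := s ×ˢ s with ht
  set T : H →L[ℝ] H := ∑ k ∈ s, R k with hT
  set S : H →L[ℝ] H := adjoint T * T with hS
  have hinj : ∀ (u : Finset ((ℤ×ℤ) × List (ℤ×ℤ))),
      ∀ x ∈ u, ∀ y ∈ u, (x.1 :: x.2 : List (ℤ×ℤ)) = y.1 :: y.2 → x = y := by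
    intro u x _ y _ h
    simp only [List.cons.injEq] at h
    exact Prod.ext h.1 h.2
  have hSsum : S = ∑ p ∈ t, M p := by
    rw [hS, hT, map_sum, Finset.sum_mul_sum, ht, Finset.sum_product]
  have expand : ∀ n : ℕ, S ^ n = ∑ l ∈ tupleSet t n, (l.map M).prod := by
    intro n
    induction n with
    | zero => simp [tupleSet]
    | succ n ih =>
        rw [pow_succ', ih, tupleSet, Finset.sum_image (hinj _), Finset.sum_product,
          hSsum, Finset.sum_mul]
        refine Finset.sum_congr rfl fun p _ => ?_
        rw [Finset.mul_sum]
        refine Finset.sum_congr rfl fun l _ => ?_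
        simp [List.map_cons, List.prod_cons]
  have normL1 : ∀ l : List (ℤ×ℤ), ‖(l.map M).prod‖ ≤ (l.map fun p => d p.1 p.2 ^ 2).prod := by
    intro l
    induction l with
    | nil => simp only [List.map_nil, List.prod_nil]; exact ContinuousLinearMap.norm_id_le (𝕜 := ℝ) (E := H)
    | cons p l ih =>
        simp only [List.map_cons, List.prod_cons]
        calc ‖M p * (l.map M).prod‖ ≤ ‖M p‖ * ‖(l.map M).prod‖ := norm_mul_le _ _
          _ ≤ d p.1 p.2 ^ 2 * (l.map fun p => d p.1 p.2 ^ 2).prod :=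
              mul_le_mul (hM p.1 p.2) ih (norm_nonneg _) (sq_nonneg _)
  have normL2 : ∀ (l : List (ℤ×ℤ)) (q : ℤ), ‖R q * (l.map M).prod‖ ≤ C * chain2 d q l := by
    intro l
    induction l with
    | nil => intro q; simpa [chain2] using hRC q
    | cons p l ih =>
        intro q
        have he : R q * ((p::l).map M).prod
            = (R q * adjoint (R p.1)) * (R p.2 * (l.map M).prod) := by
          simp only [List.map_cons, List.prod_cons, hMdef]
          rw [mul_assoc (adjoint (R p.1)) (R p.2) ((l.map M).prod),
            ← mul_assoc (R q) (adjoint (R p.1)) _]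
        rw [he]
        calc ‖(R q * adjoint (R p.1)) * (R p.2 * (l.map M).prod)‖
            ≤ ‖R q * adjoint (R p.1)‖ * ‖R p.2 * (l.map M).prod‖ := norm_mul_le _ _
          _ ≤ d q p.1 ^ 2 * (C * chain2 d p.2 l) :=
              mul_le_mul (hM' q p.1) (ih p.2) (norm_nonneg _) (sq_nonneg _)
          _ = C * chain2 d q (p::l) := by simp only [chain2]; ring
  have perTuple : ∀ (p : ℤ×ℤ) (l : List (ℤ×ℤ)),
      ‖((p::l).map M).prod‖ ≤ C * (d p.1 p.2 * chainW d p.2 l) := by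
    intro p l
    have hg1 := normL1 (p::l)
    have hg2 : ‖((p::l).map M).prod‖ ≤ C * (C * chain2 d p.2 l) := by
      have he : ((p::l).map M).prod = adjoint (R p.1) * (R p.2 * (l.map M).prod) := by
        simp only [List.map_cons, List.prod_cons, hMdef]
        rw [mul_assoc]
      rw [he]
      calc ‖adjoint (R p.1) * (R p.2 * (l.map M).prod)‖
          ≤ ‖adjoint (R p.1)‖ * ‖R p.2 * (l.map M).prod‖ := norm_mul_le _ _
        _ ≤ C * (C * chain2 d p.2 l) := by
            apply mul_le_mul ?_ (normL2 l p.2) (norm_nonneg _) hC0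
            rw [adjoint.norm_map]
            exact hRC p.1
    have hX0 := norm_nonneg (((p::l).map M).prod)
    have hRHS0 : 0 ≤ C * (d p.1 p.2 * chainW d p.2 l) :=
      mul_nonneg hC0 (mul_nonneg (hd _ _) (chainW_nonneg hd l p.2))
    apply le_of_sq_le_sq2 hX0 hRHS0
    have e : (((p::l)).map fun r => d r.1 r.2 ^ 2).prod * (C * (C * chain2 d p.2 l))
        = (C * (d p.1 p.2 * chainW d p.2 l))^2 := by
      simp only [List.map_cons, List.prod_cons]
      calc d p.1 p.2 ^ 2 * (l.map fun r => d r.1 r.2 ^ 2).prod * (C * (C * chain2 d p.2 l))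
          = C^2 * (d p.1 p.2 ^2 * ((l.map fun r => d r.1 r.2 ^ 2).prod * chain2 d p.2 l)) := by
            ring
        _ = C^2 * (d p.1 p.2 ^2 * (chainW d p.2 l)^2) := by rw [chain_ident]
        _ = (C * (d p.1 p.2 * chainW d p.2 l))^2 := by ring
    calc ‖((p::l).map M).prod‖^2
        = ‖((p::l).map M).prod‖ * ‖((p::l).map M).prod‖ := sq _
      _ ≤ ((p::l).map fun r => d r.1 r.2 ^ 2).prod * (C * (C * chain2 d p.2 l)) :=
          mul_le_mul hg1 hg2 hX0 (prodW_nonneg hd _)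
      _ = (C * (d p.1 p.2 * chainW d p.2 l))^2 := e
  have sumChainW : ∀ (n : ℕ) (q : ℤ), ∑ l ∈ tupleSet t n, chainW d q l ≤ β ^ (2*n) := by
    intro n
    induction n with
    | zero => intro q; simp [tupleSet, chainW]
    | succ n ih =>
        intro q
        rw [tupleSet, Finset.sum_image (hinj _), Finset.sum_product]
        simp only [chainW]
        calc ∑ p ∈ t, ∑ l ∈ tupleSet t n, d q p.1 * d p.1 p.2 * chainW d p.2 l
            = ∑ p ∈ t, d q p.1 * d p.1 p.2 * ∑ l ∈ tupleSet t n, chainW d p.2 l := by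
              refine Finset.sum_congr rfl fun p _ => ?_; rw [Finset.mul_sum]
          _ ≤ ∑ p ∈ t, d q p.1 * d p.1 p.2 * β^(2*n) := by
              apply Finset.sum_le_sum; intro p _
              exact mul_le_mul_of_nonneg_left (ih p.2) (mul_nonneg (hd _ _) (hd _ _))
          _ = (∑ p ∈ t, d q p.1 * d p.1 p.2) * β^(2*n) := by rw [← Finset.sum_mul]
          _ ≤ (β * β) * β^(2*n) := by
              apply mul_le_mul_of_nonneg_right ?_ (pow_nonneg hβ0 _)
              rw [ht, Finset.sum_product]
              calc ∑ j ∈ s, ∑ k ∈ s, d q j * d j k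
                  = ∑ j ∈ s, d q j * ∑ k ∈ s, d j k := by
                    refine Finset.sum_congr rfl fun j _ => ?_; rw [Finset.mul_sum]
                _ ≤ ∑ j ∈ s, d q j * β :=
                    Finset.sum_le_sum fun j _ =>
                      mul_le_mul_of_nonneg_left (hrow j) (hd _ _)
                _ = (∑ j ∈ s, d q j) * β := by rw [← Finset.sum_mul]
                _ ≤ β * β := mul_le_mul_of_nonneg_right (hrow q) hβ0
          _ = β^(2*(n+1)) := by ring
  have normSpow : ∀ n : ℕ, ‖S ^ (n+1)‖ ≤ C * (((s.card : ℝ) * β) * β^(2*n)) := by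
    intro n
    rw [expand (n+1)]
    calc ‖∑ l ∈ tupleSet t (n+1), (l.map M).prod‖
        ≤ ∑ l ∈ tupleSet t (n+1), ‖(l.map M).prod‖ := norm_sum_le _ _
      _ = ∑ pl ∈ t ×ˢ tupleSet t n, ‖((pl.1 :: pl.2).map M).prod‖ := by
          rw [tupleSet, Finset.sum_image (hinj _)]
      _ ≤ ∑ pl ∈ t ×ˢ tupleSet t n, C * (d pl.1.1 pl.1.2 * chainW d pl.1.2 pl.2) :=
          Finset.sum_le_sum fun pl _ => perTuple pl.1 pl.2
      _ = C * ∑ p ∈ t, d p.1 p.2 * ∑ l ∈ tupleSet t n, chainW d p.2 l := by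
          rw [Finset.sum_product, Finset.mul_sum]
          refine Finset.sum_congr rfl fun p _ => ?_
          rw [Finset.mul_sum, Finset.mul_sum]
          all_goals exact Finset.sum_congr rfl fun l _ => by ring
      _ ≤ C * (((s.card : ℝ) * β) * β^(2*n)) := by
          apply mul_le_mul_of_nonneg_left ?_ hC0
          calc ∑ p ∈ t, d p.1 p.2 * ∑ l ∈ tupleSet t n, chainW d p.2 l
              ≤ ∑ p ∈ t, d p.1 p.2 * β^(2*n) := by
                apply Finset.sum_le_sum; intro p _
                exact mul_le_mul_of_nonneg_left (sumChainW n p.2) (hd _ _)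
            _ = (∑ p ∈ t, d p.1 p.2) * β^(2*n) := by rw [← Finset.sum_mul]
            _ ≤ ((s.card : ℝ) * β) * β^(2*n) := by
                apply mul_le_mul_of_nonneg_right ?_ (pow_nonneg hβ0 _)
                rw [ht, Finset.sum_product]
                calc ∑ j ∈ s, ∑ k ∈ s, d j k ≤ ∑ _j ∈ s, β :=
                      Finset.sum_le_sum fun j _ => hrow j
                  _ = (s.card : ℝ) * β := by
                      rw [Finset.sum_const, nsmul_eq_mul]
  have hstarS : star S = S := by
    rw [hS, star_mul, star_eq_adjoint, star_eq_adjoint, adjoint_adjoint]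
  have hpow : ∀ m : ℕ, ‖S ^ (2^m)‖ = ‖S‖ ^ (2^m) := by
    intro m
    induction m with
    | zero => simp
    | succ m ih =>
        have h2 : (2:ℕ)^(m+1) = 2^m * 2 := by ring
        rw [h2, pow_mul, pow_mul]
        have hW : star (S ^ (2^m)) = S ^ (2^m) := by rw [star_pow, hstarS]
        calc ‖(S^(2^m))^2‖ = ‖star (S^(2^m)) * S^(2^m)‖ := by rw [hW, sq]
          _ = ‖S^(2^m)‖ * ‖S^(2^m)‖ := CStarRing.norm_star_mul_self
          _ = (‖S‖^(2^m))^2 := by rw [ih]; ring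
  have hT2 : ‖T‖ * ‖T‖ = ‖S‖ := by
    rw [hS, mul_def]
    exact (norm_adjoint_comp_self T).symm
  set B := max β 1 with hB
  have hB1 : (1:ℝ) ≤ B := le_max_right _ _
  have hββ : β ≤ B := le_max_left _ _
  have hB0 : (0:ℝ) < B := lt_of_lt_of_le one_pos hB1
  by_contra hcon
  push_neg at hcon
  set N : ℝ := (s.card : ℝ) with hN
  have hN0 : 0 ≤ N := Nat.cast_nonneg _
  have key : ∀ m : ℕ, ‖T‖ ^ (2^(m+1)) ≤ (C * N) * B ^ (2^(m+1)) := by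
    intro m
    have h1 : ‖T‖ ^ (2^(m+1)) = ‖S‖ ^ (2^m) := by
      have : (2:ℕ)^(m+1) = 2 * 2^m := by ring
      rw [this, pow_mul, sq, hT2]
    have he : 2^m - 1 + 1 = 2^m := Nat.succ_pred_eq_of_pos (Nat.pow_pos (by norm_num))
    have h3 := normSpow (2^m - 1)
    rw [he] at h3
    have hβpow : β * β^(2*(2^m-1)) ≤ B^(2^(m+1)) := by
      have harith : 2*(2^m-1)+1 ≤ 2^(m+1) := by
        have : 1 ≤ 2^m := Nat.one_le_two_pow
        omega
      calc β * β^(2*(2^m-1)) = β^(2*(2^m-1)+1) := (pow_succ' β _).symm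
        _ ≤ B^(2*(2^m-1)+1) := pow_le_pow_left₀ hβ0 hββ _
        _ ≤ B^(2^(m+1)) := pow_le_pow_right₀ hB1 harith
    calc ‖T‖ ^ (2^(m+1)) = ‖S‖^(2^m) := h1
      _ = ‖S^(2^m)‖ := (hpow m).symm
      _ ≤ C * ((N * β) * β^(2*(2^m-1))) := h3
      _ = (C * N) * (β * β^(2*(2^m-1))) := by ring
      _ ≤ (C * N) * B^(2^(m+1)) :=
          mul_le_mul_of_nonneg_left hβpow (mul_nonneg hC0 hN0)
  have hr1 : 1 < ‖T‖ / B := (one_lt_div hB0).mpr hcon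
  obtain ⟨n0, hn0⟩ := pow_unbounded_of_one_lt (C * N) hr1
  have hmle : n0 ≤ 2^(n0+1) := le_trans (Nat.lt_two_pow_self (n := n0)).le
    (Nat.pow_le_pow_right (by norm_num) (Nat.le_succ n0))
  have hle : (‖T‖/B) ^ n0 ≤ (‖T‖/B) ^ (2^(n0+1)) := pow_le_pow_right₀ hr1.le hmle
  have hdiv : (‖T‖/B) ^ (2^(n0+1)) ≤ C * N := by
    rw [div_pow, div_le_iff₀ (pow_pos hB0 _)]
    exact key n0
  linarith
set_option maxHeartbeats 1000000

variable {H : Type} [NormedAddCommGroup H] [InnerProductSpace ℝ H] [CompleteSpace H]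

lemma opNorm_le_of_inner' (A : H →L[ℝ] H) {M : ℝ} (hM : 0 ≤ M)
    (h : ∀ x y : H, (inner ℝ (A x) y : ℝ) ≤ M * (‖x‖ * ‖y‖)) : ‖A‖ ≤ M := by
  apply ContinuousLinearMap.opNorm_le_bound _ hM
  intro x
  rcases eq_or_ne (A x) 0 with hx | hx
  · rw [hx, norm_zero]; positivity
  · have h1 := h x (A x)
    rw [real_inner_self_eq_norm_mul_norm] at h1
    have h2 : 0 < ‖A x‖ := norm_pos_iff.mpr hx
    nlinarith

/-- Strong insertion of the partition of identity. -/
lemma opNorm_insert (Q : ℤ → H →L[ℝ] H)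
    (hQsum : ∀ x : H, HasSum (fun j => Q j x) x)
    (U V : H →L[ℝ] H) (b : ℤ → ℝ) (hb : Summable b) (hb0 : 0 ≤ ∑' m : ℤ, b m)
    (hop : ∀ m : ℤ, ‖U ∘L (Q m ∘L V)‖ ≤ b m) :
    ‖U ∘L V‖ ≤ ∑' m : ℤ, b m := by
  apply ContinuousLinearMap.opNorm_le_bound _ hb0
  intro x
  have hs : HasSum (fun m : ℤ => (U ∘L (Q m ∘L V)) x) ((U ∘L V) x) := (hQsum (V x)).mapL U
  have hnorm : ∀ m : ℤ, ‖(U ∘L (Q m ∘L V)) x‖ ≤ b m * ‖x‖ := fun m =>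
    le_trans (ContinuousLinearMap.le_opNorm _ _)
      (mul_le_mul_of_nonneg_right (hop m) (norm_nonneg x))
  have hsum2 : Summable (fun m : ℤ => b m * ‖x‖) := hb.mul_right _
  have hsumn : Summable (fun m : ℤ => ‖(U ∘L (Q m ∘L V)) x‖) :=
    Summable.of_nonneg_of_le (fun _ => norm_nonneg _) hnorm hsum2
  calc ‖(U ∘L V) x‖ = ‖∑' m : ℤ, (U ∘L (Q m ∘L V)) x‖ := by rw [hs.tsum_eq]
    _ ≤ ∑' m : ℤ, ‖(U ∘L (Q m ∘L V)) x‖ := norm_tsum_le_tsum_norm hsumn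
    _ ≤ ∑' m : ℤ, b m * ‖x‖ := Summable.tsum_le_tsum hnorm hsumn hsum2
    _ = (∑' m : ℤ, b m) * ‖x‖ := tsum_mul_right

/-- Weak insertion of the (adjoint of the) partition of identity. -/
lemma opNorm_insert_adj (Q : ℤ → H →L[ℝ] H)
    (hQsum : ∀ x : H, HasSum (fun j => Q j x) x)
    (U V : H →L[ℝ] H) (b : ℤ → ℝ) (hb : Summable b) (hb0 : 0 ≤ ∑' m : ℤ, b m)
    (hop : ∀ m : ℤ, ‖U ∘L (adjoint (Q m) ∘L V)‖ ≤ b m) :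
    ‖U ∘L V‖ ≤ ∑' m : ℤ, b m := by
  apply opNorm_le_of_inner' _ hb0
  intro x y
  have hterm : ∀ m : ℤ, (inner ℝ (V x) (Q m (adjoint U y)) : ℝ)
      = inner ℝ ((U ∘L (adjoint (Q m) ∘L V)) x) y := by
    intro m
    rw [← ContinuousLinearMap.adjoint_inner_left (Q m),
      ContinuousLinearMap.adjoint_inner_right U]
    rfl
  have hs : HasSum (fun m : ℤ => (inner ℝ ((U ∘L (adjoint (Q m) ∘L V)) x) y : ℝ))
      ((inner ℝ ((U ∘L V) x) y : ℝ)) := by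
    have h1 := (hQsum (adjoint U y)).mapL (innerSL ℝ (V x))
    have hval : (inner ℝ (V x) (adjoint U y) : ℝ) = inner ℝ ((U ∘L V) x) y := by
      rw [ContinuousLinearMap.adjoint_inner_right U]; rfl
    rw [← hval]
    exact h1.congr_fun fun m => (hterm m).symm
  have hxy : (0:ℝ) ≤ ‖x‖ * ‖y‖ := mul_nonneg (norm_nonneg x) (norm_nonneg y)
  have habs : ∀ m : ℤ, |(inner ℝ ((U ∘L (adjoint (Q m) ∘L V)) x) y : ℝ)|
      ≤ b m * (‖x‖ * ‖y‖) := by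
    intro m
    have h1 : |(inner ℝ ((U ∘L (adjoint (Q m) ∘L V)) x) y : ℝ)|
        ≤ ‖(U ∘L (adjoint (Q m) ∘L V)) x‖ * ‖y‖ := abs_real_inner_le_norm _ _
    have h2 : ‖(U ∘L (adjoint (Q m) ∘L V)) x‖ ≤ ‖U ∘L (adjoint (Q m) ∘L V)‖ * ‖x‖ :=
      ContinuousLinearMap.le_opNorm _ _
    have h3 := hop m
    have h4 := ContinuousLinearMap.opNorm_nonneg (U ∘L (adjoint (Q m) ∘L V))
    nlinarith [norm_nonneg x, norm_nonneg y, norm_nonneg ((U ∘L (adjoint (Q m) ∘L V)) x)]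
  have hsum2 : Summable (fun m : ℤ => b m * (‖x‖ * ‖y‖)) := hb.mul_right _
  have hsumabs : Summable (fun m : ℤ =>
      |(inner ℝ ((U ∘L (adjoint (Q m) ∘L V)) x) y : ℝ)|) :=
    Summable.of_nonneg_of_le (fun _ => abs_nonneg _) habs hsum2
  calc (inner ℝ ((U ∘L V) x) y : ℝ)
      = ∑' m : ℤ, (inner ℝ ((U ∘L (adjoint (Q m) ∘L V)) x) y : ℝ) := hs.tsum_eq.symm
    _ ≤ |∑' m : ℤ, (inner ℝ ((U ∘L (adjoint (Q m) ∘L V)) x) y : ℝ)| := le_abs_self _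
    _ ≤ ∑' m : ℤ, |(inner ℝ ((U ∘L (adjoint (Q m) ∘L V)) x) y : ℝ)| := by
        have h := norm_tsum_le_tsum_norm
          (f := fun m : ℤ => (inner ℝ ((U ∘L (adjoint (Q m) ∘L V)) x) y : ℝ)) hsumabs
        simpa [Real.norm_eq_abs] using h
    _ ≤ ∑' m : ℤ, b m * (‖x‖ * ‖y‖) := Summable.tsum_le_tsum habs hsumabs hsum2
    _ = (∑' m : ℤ, b m) * (‖x‖ * ‖y‖) := tsum_mul_right

open scoped BigOperators

/-- **Carbery's variant of Cotlar's Lemma.** Given `ε > 0` and `C > 0`, there is a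
constant `C'` (depending only on `ε` and `C`) such that for all Hilbert spaces `H` and
families `(Q k)`, `(R k)` of bounded operators on `H` with only finitely many `R k`
nonzero, satisfying (i) `∑ Q j = I` strongly, (ii) almost-orthogonality of the `Q`'s,
(iii) almost-orthogonality of the `R`'s against the `Q`'s, and (iv) `‖R j‖ ≤ C`,
one has `‖∑ R j‖ ≤ C'`. -/
theorem carbery_cotlar (ε C : ℝ) (hε : 0 < ε) (hC : 0 < C) :
    ∃ C' : ℝ, ∀ (H : Type) (_ : NormedAddCommGroup H) (_ : InnerProductSpace ℝ H)
      (_ : CompleteSpace H) (Q R : ℤ → H →L[ℝ] H) (s : Finset ℤ),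
      (∀ k ∉ s, R k = 0) →
      (∀ x : H, HasSum (fun j => Q j x) x) →
      (∀ j k : ℤ,
        ‖(ContinuousLinearMap.adjoint (Q j)).comp (Q k)‖
          + ‖(Q j).comp (ContinuousLinearMap.adjoint (Q k))‖
            ≤ C * (2:ℝ) ^ (-(ε * |(j:ℝ) - (k:ℝ)|))) →
      (∀ j k : ℤ,
        ‖(R j).comp (ContinuousLinearMap.adjoint (Q k))‖
          + ‖(ContinuousLinearMap.adjoint (R j)).comp (Q k)‖
            ≤ C * (2:ℝ) ^ (-(ε * |(j:ℝ) - (k:ℝ)|))) →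
      (∀ j : ℤ, ‖R j‖ ≤ C) →
      ‖∑ k ∈ s, R k‖ ≤ C' := by
  classical
  have hc0 : 0 < ε/32 := by linarith
  set K : ℝ := ∑' m : ℤ, ker (ε/32) m 0 with hKdef
  have hKsummable := summable_ker hc0 (0:ℤ)
  have hK1 : (1:ℝ) ≤ K := by
    have := Summable.le_tsum hKsummable 0 (fun m _ => (ker_pos _ m 0).le)
    simpa [ker_self] using this
  have hK0 : (0:ℝ) < K := lt_of_lt_of_le one_pos hK1
  have hsqrtC : 0 ≤ Real.sqrt C := Real.sqrt_nonneg C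
  set C1 : ℝ := C * Real.sqrt C + C * C with hC1def
  set C2 : ℝ := C1 * K with hC2def
  set C3 : ℝ := C * C2 + C * C with hC3def
  set A : ℝ := C3 * K with hAdef
  have hC10 : 0 < C1 := by nlinarith
  have hC20 : 0 < C2 := by nlinarith
  have hC30 : 0 < C3 := by nlinarith
  have hA0 : 0 < A := by nlinarith
  have tsum_le_K : ∀ (c : ℝ), ε/32 ≤ c → 0 < c → ∀ l : ℤ, ∑' m : ℤ, ker c m l ≤ K := by
    intro c h1 h2 l
    calc ∑' m : ℤ, ker c m l ≤ ∑' m : ℤ, ker (ε/32) m l :=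
          Summable.tsum_le_tsum (fun m => ker_mono h1 m l) (summable_ker h2 l) (summable_ker hc0 l)
      _ = K := by rw [hKdef, tsum_ker_eq]
  refine ⟨max (Real.sqrt A * K) 1, ?_⟩
  intro H _inst1 _inst2 _inst3 Q R s hRs hQsum hQQ hQR hRnorm
  have hQQ1 : ∀ j k : ℤ, ‖(ContinuousLinearMap.adjoint (Q j)) ∘L (Q k)‖ ≤ C * ker ε j k := by
    intro j k
    have h := hQQ j k
    have h2 := norm_nonneg ((Q j).comp (ContinuousLinearMap.adjoint (Q k)))
    have he : C * (2:ℝ) ^ (-(ε * |(j:ℝ) - (k:ℝ)|)) = C * ker ε j k := rfl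
    rw [he] at h; linarith
  have hQQ2 : ∀ j k : ℤ, ‖(Q j) ∘L (ContinuousLinearMap.adjoint (Q k))‖ ≤ C * ker ε j k := by
    intro j k
    have h := hQQ j k
    have h2 := norm_nonneg ((ContinuousLinearMap.adjoint (Q j)).comp (Q k))
    have he : C * (2:ℝ) ^ (-(ε * |(j:ℝ) - (k:ℝ)|)) = C * ker ε j k := rfl
    rw [he] at h; linarith
  have hQR1 : ∀ j k : ℤ, ‖(R j) ∘L (ContinuousLinearMap.adjoint (Q k))‖ ≤ C * ker ε j k := by
    intro j k
    have h := hQR j k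
    have h2 := norm_nonneg ((ContinuousLinearMap.adjoint (R j)).comp (Q k))
    have he : C * (2:ℝ) ^ (-(ε * |(j:ℝ) - (k:ℝ)|)) = C * ker ε j k := rfl
    rw [he] at h; linarith
  have hQR2 : ∀ j k : ℤ, ‖(ContinuousLinearMap.adjoint (R j)) ∘L (Q k)‖ ≤ C * ker ε j k := by
    intro j k
    have h := hQR j k
    have h2 := norm_nonneg ((R j).comp (ContinuousLinearMap.adjoint (Q k)))
    have he : C * (2:ℝ) ^ (-(ε * |(j:ℝ) - (k:ℝ)|)) = C * ker ε j k := rfl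
    rw [he] at h; linarith
  have hQR2' : ∀ j k : ℤ, ‖(ContinuousLinearMap.adjoint (Q k)) ∘L (R j)‖ ≤ C * ker ε j k := by
    intro j k
    have he : (ContinuousLinearMap.adjoint (Q k)) ∘L (R j)
        = ContinuousLinearMap.adjoint ((ContinuousLinearMap.adjoint (R j)) ∘L (Q k)) := by
      rw [ContinuousLinearMap.adjoint_comp, ContinuousLinearMap.adjoint_adjoint]
    rw [he, ContinuousLinearMap.adjoint.norm_map]
    exact hQR2 j k
  have hQR1' : ∀ j k : ℤ, ‖(Q k) ∘L (ContinuousLinearMap.adjoint (R j))‖ ≤ C * ker ε j k := by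
    intro j k
    have he : (Q k) ∘L (ContinuousLinearMap.adjoint (R j))
        = ContinuousLinearMap.adjoint ((R j) ∘L (ContinuousLinearMap.adjoint (Q k))) := by
      rw [ContinuousLinearMap.adjoint_comp, ContinuousLinearMap.adjoint_adjoint]
    rw [he, ContinuousLinearMap.adjoint.norm_map]
    exact hQR1 j k
  have hQnorm : ∀ l : ℤ, ‖Q l‖ ≤ Real.sqrt C := by
    intro l
    have h := hQQ1 l l
    rw [ker_self, mul_one] at h
    rw [ContinuousLinearMap.norm_adjoint_comp_self] at h
    apply le_of_sq_le_sq' (norm_nonneg _) hsqrtC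
    rw [Real.sq_sqrt hC.le, sq]
    exact h
  have hRadj : ∀ j : ℤ, ‖ContinuousLinearMap.adjoint (R j)‖ ≤ C := by
    intro j; rw [ContinuousLinearMap.adjoint.norm_map]; exact hRnorm j
  -- Step B : composites of R's and Q's (no adjoints) decay
  have stepB1 : ∀ j l : ℤ, ‖(R j) ∘L (Q l)‖ ≤ C2 * ker (ε/4) j l := by
    intro j l
    have hcoef0 : 0 ≤ C1 * ker (ε/4) j l := mul_nonneg hC10.le (ker_pos _ _ _).le
    have hsumker := summable_ker (show 0 < ε/4 by linarith) l
    have hb : Summable (fun m : ℤ => (C1 * ker (ε/4) j l) * ker (ε/4) m l) :=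
      hsumker.mul_left _
    have hb0 : 0 ≤ ∑' m : ℤ, (C1 * ker (ε/4) j l) * ker (ε/4) m l :=
      tsum_nonneg fun m => mul_nonneg hcoef0 (ker_pos _ _ _).le
    have hop : ∀ m : ℤ, ‖(R j) ∘L (ContinuousLinearMap.adjoint (Q m) ∘L (Q l))‖
        ≤ (C1 * ker (ε/4) j l) * ker (ε/4) m l := by
      intro m
      have h1 : ‖(R j) ∘L (ContinuousLinearMap.adjoint (Q m) ∘L (Q l))‖ ≤ C1 * ker ε j m := by
        calc ‖(R j) ∘L (ContinuousLinearMap.adjoint (Q m) ∘L (Q l))‖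
            = ‖((R j) ∘L ContinuousLinearMap.adjoint (Q m)) ∘L (Q l)‖ := by
              rw [ContinuousLinearMap.comp_assoc]
          _ ≤ ‖(R j) ∘L ContinuousLinearMap.adjoint (Q m)‖ * ‖Q l‖ :=
              ContinuousLinearMap.opNorm_comp_le _ _
          _ ≤ (C * ker ε j m) * Real.sqrt C :=
              mul_le_mul (hQR1 j m) (hQnorm l) (norm_nonneg _)
                (mul_nonneg hC.le (ker_pos _ _ _).le)
          _ ≤ C1 * ker ε j m := by
              rw [hC1def]
              nlinarith [ker_pos ε j m, mul_nonneg (mul_nonneg hC.le hC.le) (ker_pos ε j m).le]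
      have h2 : ‖(R j) ∘L (ContinuousLinearMap.adjoint (Q m) ∘L (Q l))‖ ≤ C1 * ker ε m l := by
        calc ‖(R j) ∘L (ContinuousLinearMap.adjoint (Q m) ∘L (Q l))‖
            ≤ ‖R j‖ * ‖ContinuousLinearMap.adjoint (Q m) ∘L (Q l)‖ :=
              ContinuousLinearMap.opNorm_comp_le _ _
          _ ≤ C * (C * ker ε m l) :=
              mul_le_mul (hRnorm j) (hQQ1 m l) (norm_nonneg _) hC.le
          _ ≤ C1 * ker ε m l := by
              rw [hC1def]
              nlinarith [ker_pos ε m l,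
                mul_nonneg (mul_nonneg hC.le hsqrtC) (ker_pos ε m l).le]
      have := key_combine hε (norm_nonneg _) hC10.le j m l h1 h2
      calc ‖(R j) ∘L (ContinuousLinearMap.adjoint (Q m) ∘L (Q l))‖
          ≤ C1 * (ker (ε/4) j l * ker (ε/4) m l) := this
        _ = (C1 * ker (ε/4) j l) * ker (ε/4) m l := by ring
    calc ‖(R j) ∘L (Q l)‖ ≤ ∑' m : ℤ, (C1 * ker (ε/4) j l) * ker (ε/4) m l :=
          opNorm_insert_adj Q hQsum (R j) (Q l) _ hb hb0 hop
      _ = (C1 * ker (ε/4) j l) * ∑' m : ℤ, ker (ε/4) m l := tsum_mul_left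
      _ ≤ (C1 * ker (ε/4) j l) * K :=
          mul_le_mul_of_nonneg_left (tsum_le_K _ (by linarith) (by linarith) l) hcoef0
      _ = C2 * ker (ε/4) j l := by rw [hC2def]; ring
  have stepB2 : ∀ j l : ℤ, ‖(Q l) ∘L (R j)‖ ≤ C2 * ker (ε/4) j l := by
    intro j l
    have hcoef0 : 0 ≤ C1 * ker (ε/4) j l := mul_nonneg hC10.le (ker_pos _ _ _).le
    have hsumker := summable_ker (show 0 < ε/4 by linarith) l
    have hb : Summable (fun m : ℤ => (C1 * ker (ε/4) j l) * ker (ε/4) m l) :=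
      hsumker.mul_left _
    have hb0 : 0 ≤ ∑' m : ℤ, (C1 * ker (ε/4) j l) * ker (ε/4) m l :=
      tsum_nonneg fun m => mul_nonneg hcoef0 (ker_pos _ _ _).le
    have hop : ∀ m : ℤ, ‖(Q l) ∘L (ContinuousLinearMap.adjoint (Q m) ∘L (R j))‖
        ≤ (C1 * ker (ε/4) j l) * ker (ε/4) m l := by
      intro m
      have h1 : ‖(Q l) ∘L (ContinuousLinearMap.adjoint (Q m) ∘L (R j))‖ ≤ C1 * ker ε j m := by
        calc ‖(Q l) ∘L (ContinuousLinearMap.adjoint (Q m) ∘L (R j))‖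
            ≤ ‖Q l‖ * ‖ContinuousLinearMap.adjoint (Q m) ∘L (R j)‖ :=
              ContinuousLinearMap.opNorm_comp_le _ _
          _ ≤ Real.sqrt C * (C * ker ε j m) :=
              mul_le_mul (hQnorm l) (hQR2' j m) (norm_nonneg _) hsqrtC
          _ ≤ C1 * ker ε j m := by
              rw [hC1def]
              nlinarith [ker_pos ε j m, mul_nonneg (mul_nonneg hC.le hC.le) (ker_pos ε j m).le]
      have h2 : ‖(Q l) ∘L (ContinuousLinearMap.adjoint (Q m) ∘L (R j))‖ ≤ C1 * ker ε m l := by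
        calc ‖(Q l) ∘L (ContinuousLinearMap.adjoint (Q m) ∘L (R j))‖
            = ‖((Q l) ∘L ContinuousLinearMap.adjoint (Q m)) ∘L (R j)‖ := by
              rw [ContinuousLinearMap.comp_assoc]
          _ ≤ ‖(Q l) ∘L ContinuousLinearMap.adjoint (Q m)‖ * ‖R j‖ :=
              ContinuousLinearMap.opNorm_comp_le _ _
          _ ≤ (C * ker ε l m) * C :=
              mul_le_mul (hQQ2 l m) (hRnorm j) (norm_nonneg _)
                (mul_nonneg hC.le (ker_pos _ _ _).le)
          _ = (C * ker ε m l) * C := by rw [ker_symm]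
          _ ≤ C1 * ker ε m l := by
              rw [hC1def]
              nlinarith [ker_pos ε m l,
                mul_nonneg (mul_nonneg hC.le hsqrtC) (ker_pos ε m l).le]
      have := key_combine hε (norm_nonneg _) hC10.le j m l h1 h2
      calc ‖(Q l) ∘L (ContinuousLinearMap.adjoint (Q m) ∘L (R j))‖
          ≤ C1 * (ker (ε/4) j l * ker (ε/4) m l) := this
        _ = (C1 * ker (ε/4) j l) * ker (ε/4) m l := by ring
    calc ‖(Q l) ∘L (R j)‖ ≤ ∑' m : ℤ, (C1 * ker (ε/4) j l) * ker (ε/4) m l :=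
          opNorm_insert_adj Q hQsum (Q l) (R j) _ hb hb0 hop
      _ = (C1 * ker (ε/4) j l) * ∑' m : ℤ, ker (ε/4) m l := tsum_mul_left
      _ ≤ (C1 * ker (ε/4) j l) * K :=
          mul_le_mul_of_nonneg_left (tsum_le_K _ (by linarith) (by linarith) l) hcoef0
      _ = C2 * ker (ε/4) j l := by rw [hC2def]; ring
  have h416 : ε/4/4 = ε/16 := by ring
  have hm4 : ∀ j k : ℤ, ker ε j k ≤ ker (ε/4) j k := fun j k =>
    ker_mono (by linarith) j k
  -- Step C : almost-orthogonality of the R's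
  have stepC1 : ∀ j k : ℤ, ‖(ContinuousLinearMap.adjoint (R j)) ∘L (R k)‖
      ≤ A * ker (ε/16) j k := by
    intro j k
    have hcoef0 : 0 ≤ C3 * ker (ε/16) j k := mul_nonneg hC30.le (ker_pos _ _ _).le
    have hsumker := summable_ker (show 0 < ε/16 by linarith) k
    have hb : Summable (fun m : ℤ => (C3 * ker (ε/16) j k) * ker (ε/16) m k) :=
      hsumker.mul_left _
    have hb0 : 0 ≤ ∑' m : ℤ, (C3 * ker (ε/16) j k) * ker (ε/16) m k :=
      tsum_nonneg fun m => mul_nonneg hcoef0 (ker_pos _ _ _).le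
    have hop : ∀ m : ℤ, ‖(ContinuousLinearMap.adjoint (R j)) ∘L ((Q m) ∘L (R k))‖
        ≤ (C3 * ker (ε/16) j k) * ker (ε/16) m k := by
      intro m
      have h1 : ‖(ContinuousLinearMap.adjoint (R j)) ∘L ((Q m) ∘L (R k))‖
          ≤ C3 * ker (ε/4) j m := by
        calc ‖(ContinuousLinearMap.adjoint (R j)) ∘L ((Q m) ∘L (R k))‖
            = ‖((ContinuousLinearMap.adjoint (R j)) ∘L (Q m)) ∘L (R k)‖ := by
              rw [ContinuousLinearMap.comp_assoc]
          _ ≤ ‖(ContinuousLinearMap.adjoint (R j)) ∘L (Q m)‖ * ‖R k‖ :=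
              ContinuousLinearMap.opNorm_comp_le _ _
          _ ≤ (C * ker ε j m) * C :=
              mul_le_mul (hQR2 j m) (hRnorm k) (norm_nonneg _)
                (mul_nonneg hC.le (ker_pos _ _ _).le)
          _ ≤ C3 * ker (ε/4) j m := by
              have hmm := hm4 j m
              have hp1 := ker_pos ε j m
              have hp2 := ker_pos (ε/4) j m
              rw [hC3def]
              nlinarith [mul_nonneg (mul_nonneg hC.le hC20.le) (ker_pos (ε/4) j m).le,
                mul_nonneg (mul_nonneg hC.le hC.le) hp1.le]
      have h2 : ‖(ContinuousLinearMap.adjoint (R j)) ∘L ((Q m) ∘L (R k))‖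
          ≤ C3 * ker (ε/4) m k := by
        calc ‖(ContinuousLinearMap.adjoint (R j)) ∘L ((Q m) ∘L (R k))‖
            ≤ ‖ContinuousLinearMap.adjoint (R j)‖ * ‖(Q m) ∘L (R k)‖ :=
              ContinuousLinearMap.opNorm_comp_le _ _
          _ ≤ C * (C2 * ker (ε/4) k m) :=
              mul_le_mul (hRadj j) (stepB2 k m) (norm_nonneg _) hC.le
          _ = C * (C2 * ker (ε/4) m k) := by rw [ker_symm (ε/4) k m]
          _ ≤ C3 * ker (ε/4) m k := by
              rw [hC3def]
              nlinarith [ker_pos (ε/4) m k,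
                mul_nonneg (mul_nonneg hC.le hC.le) (ker_pos (ε/4) m k).le]
      have hkey := key_combine (show 0 < ε/4 by linarith) (norm_nonneg _) hC30.le j m k h1 h2
      rw [h416] at hkey
      calc ‖(ContinuousLinearMap.adjoint (R j)) ∘L ((Q m) ∘L (R k))‖
          ≤ C3 * (ker (ε/16) j k * ker (ε/16) m k) := hkey
        _ = (C3 * ker (ε/16) j k) * ker (ε/16) m k := by ring
    calc ‖(ContinuousLinearMap.adjoint (R j)) ∘L (R k)‖
        ≤ ∑' m : ℤ, (C3 * ker (ε/16) j k) * ker (ε/16) m k :=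
          opNorm_insert Q hQsum (ContinuousLinearMap.adjoint (R j)) (R k) _ hb hb0 hop
      _ = (C3 * ker (ε/16) j k) * ∑' m : ℤ, ker (ε/16) m k := tsum_mul_left
      _ ≤ (C3 * ker (ε/16) j k) * K :=
          mul_le_mul_of_nonneg_left (tsum_le_K _ (by linarith) (by linarith) k) hcoef0
      _ = A * ker (ε/16) j k := by rw [hAdef]; ring
  have stepC2 : ∀ j k : ℤ, ‖(R j) ∘L (ContinuousLinearMap.adjoint (R k))‖
      ≤ A * ker (ε/16) j k := by
    intro j k
    have hcoef0 : 0 ≤ C3 * ker (ε/16) j k := mul_nonneg hC30.le (ker_pos _ _ _).le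
    have hsumker := summable_ker (show 0 < ε/16 by linarith) k
    have hb : Summable (fun m : ℤ => (C3 * ker (ε/16) j k) * ker (ε/16) m k) :=
      hsumker.mul_left _
    have hb0 : 0 ≤ ∑' m : ℤ, (C3 * ker (ε/16) j k) * ker (ε/16) m k :=
      tsum_nonneg fun m => mul_nonneg hcoef0 (ker_pos _ _ _).le
    have hop : ∀ m : ℤ, ‖(R j) ∘L ((Q m) ∘L (ContinuousLinearMap.adjoint (R k)))‖
        ≤ (C3 * ker (ε/16) j k) * ker (ε/16) m k := by
      intro m
      have h1 : ‖(R j) ∘L ((Q m) ∘L (ContinuousLinearMap.adjoint (R k)))‖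
          ≤ C3 * ker (ε/4) j m := by
        calc ‖(R j) ∘L ((Q m) ∘L (ContinuousLinearMap.adjoint (R k)))‖
            = ‖((R j) ∘L (Q m)) ∘L (ContinuousLinearMap.adjoint (R k))‖ := by
              rw [ContinuousLinearMap.comp_assoc]
          _ ≤ ‖(R j) ∘L (Q m)‖ * ‖ContinuousLinearMap.adjoint (R k)‖ :=
              ContinuousLinearMap.opNorm_comp_le _ _
          _ ≤ (C2 * ker (ε/4) j m) * C :=
              mul_le_mul (stepB1 j m) (hRadj k) (norm_nonneg _)
                (mul_nonneg hC20.le (ker_pos _ _ _).le)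
          _ ≤ C3 * ker (ε/4) j m := by
              rw [hC3def]
              nlinarith [ker_pos (ε/4) j m,
                mul_nonneg (mul_nonneg hC.le hC.le) (ker_pos (ε/4) j m).le]
      have h2 : ‖(R j) ∘L ((Q m) ∘L (ContinuousLinearMap.adjoint (R k)))‖
          ≤ C3 * ker (ε/4) m k := by
        calc ‖(R j) ∘L ((Q m) ∘L (ContinuousLinearMap.adjoint (R k)))‖
            ≤ ‖R j‖ * ‖(Q m) ∘L (ContinuousLinearMap.adjoint (R k))‖ :=
              ContinuousLinearMap.opNorm_comp_le _ _
          _ ≤ C * (C * ker ε k m) :=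
              mul_le_mul (hRnorm j) (hQR1' k m) (norm_nonneg _) hC.le
          _ = C * (C * ker ε m k) := by rw [ker_symm ε k m]
          _ ≤ C3 * ker (ε/4) m k := by
              have hmm := hm4 m k
              have hp1 := ker_pos ε m k
              rw [hC3def]
              nlinarith [mul_nonneg (mul_nonneg hC.le hC20.le) (ker_pos (ε/4) m k).le,
                mul_nonneg (mul_nonneg hC.le hC.le) hp1.le]
      have hkey := key_combine (show 0 < ε/4 by linarith) (norm_nonneg _) hC30.le j m k h1 h2
      rw [h416] at hkey
      calc ‖(R j) ∘L ((Q m) ∘L (ContinuousLinearMap.adjoint (R k)))‖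
          ≤ C3 * (ker (ε/16) j k * ker (ε/16) m k) := hkey
        _ = (C3 * ker (ε/16) j k) * ker (ε/16) m k := by ring
    calc ‖(R j) ∘L (ContinuousLinearMap.adjoint (R k))‖
        ≤ ∑' m : ℤ, (C3 * ker (ε/16) j k) * ker (ε/16) m k :=
          opNorm_insert Q hQsum (R j) (ContinuousLinearMap.adjoint (R k)) _ hb hb0 hop
      _ = (C3 * ker (ε/16) j k) * ∑' m : ℤ, ker (ε/16) m k := tsum_mul_left
      _ ≤ (C3 * ker (ε/16) j k) * K :=
          mul_le_mul_of_nonneg_left (tsum_le_K _ (by linarith) (by linarith) k) hcoef0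
      _ = A * ker (ε/16) j k := by rw [hAdef]; ring
  -- Assemble : Cotlar-Stein for the R's
  set d : ℤ → ℤ → ℝ := fun j k => Real.sqrt A * ker (ε/32) j k with hddef
  have hd0 : ∀ j k : ℤ, 0 ≤ d j k := fun j k =>
    mul_nonneg (Real.sqrt_nonneg A) (ker_pos _ _ _).le
  have hdsq : ∀ j k : ℤ, d j k ^ 2 = A * ker (ε/16) j k := by
    intro j k
    have h1 : (2:ℝ) * (ε/32) = ε/16 := by ring
    calc d j k ^ 2 = Real.sqrt A ^ 2 * (ker (ε/32) j k * ker (ε/32) j k) := by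
          rw [hddef]; ring
      _ = A * ker (ε/16) j k := by
          rw [Real.sq_sqrt hA0.le, ker_mul_self, h1]
  have hM : ∀ j k : ℤ, ‖ContinuousLinearMap.adjoint (R j) * R k‖ ≤ d j k ^ 2 := by
    intro j k
    rw [hdsq, ContinuousLinearMap.mul_def]
    exact stepC1 j k
  have hM' : ∀ j k : ℤ, ‖R j * ContinuousLinearMap.adjoint (R k)‖ ≤ d j k ^ 2 := by
    intro j k
    rw [hdsq, ContinuousLinearMap.mul_def]
    exact stepC2 j k
  have hrow : ∀ q : ℤ, ∑ k ∈ s, d q k ≤ Real.sqrt A * K := by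
    intro q
    calc ∑ k ∈ s, d q k = Real.sqrt A * ∑ k ∈ s, ker (ε/32) q k := by
          rw [hddef, Finset.mul_sum]
      _ ≤ Real.sqrt A * K := by
          apply mul_le_mul_of_nonneg_left ?_ (Real.sqrt_nonneg A)
          calc ∑ k ∈ s, ker (ε/32) q k = ∑ k ∈ s, ker (ε/32) k q :=
                Finset.sum_congr rfl (fun k _ => ker_symm _ _ _)
            _ ≤ ∑' m : ℤ, ker (ε/32) m q :=
                Summable.sum_le_tsum s (fun m _ => (ker_pos _ _ _).le) (summable_ker hc0 q)
            _ = K := by rw [hKdef, tsum_ker_eq]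
  exact cotlar_stein R s d C (Real.sqrt A * K) hC.le
    (mul_nonneg (Real.sqrt_nonneg A) hK0.le) hd0 hM hM' hRnorm hrow
end
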